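/- Let W = (𝒫, n) be a well-defined Wilson loop diagram with V_𝒫 = Fin n, and let M be its matroid M(W). If F ⊆ Fin n is a nonempty cyclic flat of M (a flat that is a union of circuits of M), then there exists P ⊆ 𝒫 with F = F(P) and |F| > |P|; indeed one may take P = Prop(F). -/

import Mathlib

open Matroid Set

/-- The support of a propagator: its two endpoints and their cyclic successors. -/
def Vp (n : ℕ) [NeZero n] (p : Fin n × Fin n) : Set (Fin n) :=
  {p.1, p.1 + 1, p.2, p.2 + 1}

/-- The support of a set of propagators. -/
def VP (n : ℕ) [NeZero n] (P : Set (Fin n × Fin n)) : Set (Fin n) :=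
  ⋃ p ∈ P, Vp n p

/-- `propsOf n Ps S` is `Prop(S)`: the propagators of `Ps` whose support meets `S`. -/
def propsOf (n : ℕ) [NeZero n] (Ps : Set (Fin n × Fin n)) (S : Set (Fin n)) :
    Set (Fin n × Fin n) :=
  {p ∈ Ps | (Vp n p ∩ S).Nonempty}

/-- A Wilson loop diagram `(Ps, n)` is well defined if `|V_P| ≥ |P| + 3`
for every nonempty `P ⊆ Ps`. -/
def WellDefinedWLD (n : ℕ) [NeZero n] (Ps : Set (Fin n × Fin n)) : Prop :=
  ∀ P ⊆ Ps, P.Nonempty → P.ncard + 3 ≤ (VP n P).ncard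
/-- A circuit of a matroid: a minimal dependent set. -/
def Matroid.IsCircuitOf {α : Type*} (M : Matroid α) (C : Set α) : Prop :=
  M.Dep C ∧ ∀ D ⊂ C, ¬ M.Dep D

/-- A union of circuits (a cyclic set) of a matroid. -/
def Matroid.UnionOfCircuits {α : Type*} (M : Matroid α) (C : Set α) : Prop :=
  ∃ 𝒞 : Set (Set α), (∀ D ∈ 𝒞, M.IsCircuitOf D) ∧ C = ⋃₀ 𝒞

/-- A matroid is connected if its ground set is nonempty and any two elements of the
ground set are equal or lie on a common circuit. -/
def Matroid.Conn {α : Type*} (M : Matroid α) : Prop :=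
  M.E.Nonempty ∧ ∀ x ∈ M.E, ∀ y ∈ M.E, x = y ∨ ∃ C, M.IsCircuitOf C ∧ x ∈ C ∧ y ∈ C

/-- The rank of a set in a matroid: the maximal size of an independent subset. -/
noncomputable def Matroid.rk' {α : Type*} (M : Matroid α) (X : Set α) : ℕ :=
  sSup (Set.ncard '' {I | M.Indep I ∧ I ⊆ X})

/-- Contraction of a matroid by a set, defined via duality. -/
def Matroid.contractBy {α : Type*} (M : Matroid α) (C : Set α) : Matroid α :=
  (M✶ ↾ (M.E \ C))✶

/-- The propagator flat `F(P)`: vertices supporting only propagators in `P`. -/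
def FP (n : ℕ) [NeZero n] (Ps P : Set (Fin n × Fin n)) : Set (Fin n) :=
  VP n P \ VP n (Ps \ P)

section Aux

variable {n : ℕ} [NeZero n] {Ps : Set (Fin n × Fin n)}

lemma propsOf_mono {A B : Set (Fin n)} (h : A ⊆ B) :
    propsOf n Ps A ⊆ propsOf n Ps B := fun p hp =>
  ⟨hp.1, hp.2.mono (inter_subset_inter_right _ h)⟩

lemma propsOf_union (A B : Set (Fin n)) :
    propsOf n Ps (A ∪ B) = propsOf n Ps A ∪ propsOf n Ps B := by
  ext p
  simp only [propsOf, mem_sep_iff, mem_union, inter_union_distrib_left, union_nonempty]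
  tauto

lemma mem_VP {P : Set (Fin n × Fin n)} {x : Fin n} :
    x ∈ VP n P ↔ ∃ p ∈ P, x ∈ Vp n p := by simp [VP]

end Aux

/-- In the matroid `M(W)` of a well-defined Wilson loop diagram with
`V_Ps = Fin n`, every nonempty cyclic flat `F` is a propagator flat `F = F(P)` with
`|F| > |P|`; indeed one may take `P = Prop(F)`. -/
theorem cyclic_flat_is_propagator_flat (n : ℕ) [NeZero n]
    (Ps : Set (Fin n × Fin n)) (hW : WellDefinedWLD n Ps) (hcover : VP n Ps = Set.univ)
    (M : Matroid (Fin n)) (hME : M.E = Set.univ)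
    (hMI : ∀ S : Set (Fin n), M.Indep S ↔ ∀ U ⊆ S, U.ncard ≤ (propsOf n Ps U).ncard)
    (F : Set (Fin n)) (hFne : F.Nonempty) (hflat : M.IsFlat F)
    (hcyc : M.UnionOfCircuits F) :
    (F = FP n Ps (propsOf n Ps F) ∧ (propsOf n Ps F).ncard < F.ncard) ∧
      ∃ P ⊆ Ps, F = FP n Ps P ∧ P.ncard < F.ncard := by
  classical
  have hsubE : ∀ S : Set (Fin n), S ⊆ M.E := fun S => by rw [hME]; exact subset_univ S
  obtain ⟨𝒞, h𝒞, hF𝒞⟩ := hcyc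
  have hcirc : ∀ z ∈ F, ∃ C, M.IsCircuitOf C ∧ C ⊆ F ∧ z ∈ C := by
    intro z hz
    rw [hF𝒞] at hz
    obtain ⟨C, hC, hzC⟩ := hz
    exact ⟨C, h𝒞 C hC, by rw [hF𝒞]; exact subset_sUnion_of_mem hC, hzC⟩
  obtain ⟨I, hI⟩ := M.exists_isBasis F (hsubE F)
  have hIF := hI.subset
  have hIind := hI.indep
  have hHallI : ∀ A ⊆ I, A.ncard ≤ (propsOf n Ps A).ncard := (hMI I).1 hIind
  have hdep : ∀ S : Set (Fin n), M.Dep S ↔ ∃ U ⊆ S, (propsOf n Ps U).ncard < U.ncard := by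
    intro S
    rw [Matroid.dep_iff, hMI]
    constructor
    · rintro ⟨h, -⟩
      push_neg at h
      obtain ⟨U, hU, h⟩ := h
      exact ⟨U, hU, h⟩
    · rintro ⟨U, hU, h⟩
      exact ⟨fun h' => absurd (h' U hU) (by omega), hsubE S⟩
  -- cardinality of circuits
  have hcircCard : ∀ C, M.IsCircuitOf C → C.ncard = (propsOf n Ps C).ncard + 1 := by
    intro C hC
    obtain ⟨U, hUC, hU⟩ := (hdep C).1 hC.1
    have hUeq : U = C := by
      by_contra hne
      have hind : M.Indep U := (M.not_dep_iff (hsubE U)).1 (hC.2 U (hUC.ssubset_of_ne hne))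
      exact absurd ((hMI U).1 hind U subset_rfl) (by omega)
    subst hUeq
    obtain ⟨z, hz⟩ : U.Nonempty := by
      rw [← Set.ncard_pos (toFinite U)]; omega
    have hss : U \ {z} ⊂ U := Set.sdiff_singleton_ssubset.2 hz
    have hind : M.Indep (U \ {z}) := (M.not_dep_iff (hsubE _)).1 (hC.2 _ hss)
    have h1 : (U \ {z}).ncard ≤ (propsOf n Ps (U \ {z})).ncard := (hMI _).1 hind _ subset_rfl
    have h2 : (propsOf n Ps (U \ {z})).ncard ≤ (propsOf n Ps U).ncard :=
      Set.ncard_le_ncard (propsOf_mono diff_subset) (toFinite _)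
    have h3 : (U \ {z}).ncard = U.ncard - 1 := Set.ncard_diff_singleton_of_mem hz
    have h4 : 0 < U.ncard := by omega
    omega
  -- tight subsets of I
  set Tfam : Set (Set (Fin n)) := {A | A ⊆ I ∧ (propsOf n Ps A).ncard ≤ A.ncard} with hTfamdef
  have hunion : ∀ A ∈ Tfam, ∀ B ∈ Tfam, A ∪ B ∈ Tfam := by
    rintro A ⟨hAI, hA⟩ B ⟨hBI, hB⟩
    refine ⟨union_subset hAI hBI, ?_⟩
    have h1 := Set.ncard_union_add_ncard_inter (propsOf n Ps A) (propsOf n Ps B)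
      (toFinite _) (toFinite _)
    have h2 := Set.ncard_union_add_ncard_inter A B (toFinite _) (toFinite _)
    have h4 : (A ∩ B).ncard ≤ (propsOf n Ps (A ∩ B)).ncard :=
      hHallI _ (inter_subset_left.trans hAI)
    have h5 : propsOf n Ps (A ∩ B) ⊆ propsOf n Ps A ∩ propsOf n Ps B :=
      subset_inter (propsOf_mono inter_subset_left) (propsOf_mono inter_subset_right)
    have h6 := Set.ncard_le_ncard h5 (toFinite _)
    rw [propsOf_union]
    omega
  have hTfam_empty : (∅ : Set (Fin n)) ∈ Tfam := by
    constructor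
    · exact empty_subset I
    · have : propsOf n Ps (∅ : Set (Fin n)) = ∅ := by
        ext p; simp [propsOf]
      simp [this]
  obtain ⟨T, hT, hTmax⟩ : ∃ T ∈ Tfam, ∀ A ∈ Tfam, T.ncard ≤ A.ncard → T.ncard = A.ncard := by
    obtain ⟨T, hT, hTm⟩ := (Set.toFinite Tfam).exists_maximalFor Set.ncard Tfam ⟨∅, hTfam_empty⟩
    exact ⟨T, hT, fun A hA h => le_antisymm h (hTm hA h)⟩
  have hTI : T ⊆ I := hT.1
  have hTsub : ∀ A ∈ Tfam, A ⊆ T := by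
    intro A hA
    have hmem := hunion A hA T hT
    have hle : T.ncard ≤ (A ∪ T).ncard := Set.ncard_le_ncard subset_union_right (toFinite _)
    have heq := hTmax _ hmem hle
    have hTAT : T = A ∪ T :=
      Set.eq_of_subset_of_ncard_le subset_union_right (le_of_eq heq.symm) (toFinite _)
    intro a ha
    rw [hTAT]
    exact subset_union_left ha
  -- step 2
  have hstep2 : ∀ y ∈ F \ I, propsOf n Ps {y} ⊆ propsOf n Ps T := by
    intro y hy
    obtain ⟨U, hUsub, hUcard⟩ := (hdep _).1 (hI.insert_dep hy)
    have hyU : y ∈ U := by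
      by_contra hyU
      have hUI : U ⊆ I := fun u hu =>
        (Set.mem_insert_iff.1 (hUsub hu)).elim (fun h => absurd (h ▸ hu) hyU) id
      exact absurd (hHallI U hUI) (by omega)
    set A := U \ {y} with hAdef
    have hAI : A ⊆ I := by
      intro u hu
      rcases Set.mem_insert_iff.1 (hUsub hu.1) with h | h
      · exact absurd (by simp [h]) hu.2
      · exact h
    have hUA : U = insert y A := by
      rw [hAdef, insert_diff_singleton, insert_eq_of_mem hyU]
    have hUcard' : U.ncard = A.ncard + 1 := by
      rw [hUA]; exact Set.ncard_insert_of_notMem (fun h => h.2 rfl) (toFinite _)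
    have hmonoAU : propsOf n Ps A ⊆ propsOf n Ps U :=
      propsOf_mono (by rw [hUA]; exact subset_insert _ _)
    have hmonoAU' := Set.ncard_le_ncard hmonoAU (Set.toFinite _)
    have hAcard : A.ncard ≤ (propsOf n Ps A).ncard := hHallI A hAI
    have hPrAU : propsOf n Ps U = propsOf n Ps A :=
      (Set.eq_of_subset_of_ncard_le hmonoAU (by omega) (toFinite _)).symm
    have hAtight : A ∈ Tfam := ⟨hAI, by rw [← hPrAU]; omega⟩
    calc propsOf n Ps {y} ⊆ propsOf n Ps U := propsOf_mono (by rw [hUA]; exact singleton_subset_iff.2 (mem_insert _ _))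
    _ = propsOf n Ps A := hPrAU
    _ ⊆ propsOf n Ps T := propsOf_mono (hTsub A hAtight)
  have hstep2' : ∀ S ⊆ F \ I, propsOf n Ps S ⊆ propsOf n Ps T := by
    rintro S hS p ⟨hpPs, w, hwVp, hwS⟩
    exact hstep2 w (hS hwS) ⟨hpPs, w, hwVp, rfl⟩
  -- step 3 : I ⊆ T
  have hstep3 : I ⊆ T := by
    intro z hz
    obtain ⟨C, hC, hCF, hzC⟩ := hcirc z (hIF hz)
    have hKC : (C ∩ T) ∪ (C \ I) = C := by
      by_contra hne
      have hKsub : (C ∩ T) ∪ (C \ I) ⊆ C := union_subset inter_subset_left diff_subset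
      have hKind : M.Indep ((C ∩ T) ∪ (C \ I)) :=
        (M.not_dep_iff (hsubE _)).1 (hC.2 _ (hKsub.ssubset_of_ne hne))
      have hKHall := (hMI _).1 hKind _ subset_rfl
      have hPrK : propsOf n Ps ((C ∩ T) ∪ (C \ I)) ⊆ propsOf n Ps C ∩ propsOf n Ps T := by
        rw [propsOf_union]
        apply union_subset
        · exact subset_inter (propsOf_mono inter_subset_left) (propsOf_mono inter_subset_right)
        · exact subset_inter (propsOf_mono diff_subset)
            (hstep2' _ (diff_subset_diff_left hCF))
      have hPrK' := Set.ncard_le_ncard hPrK (toFinite _)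
      have hKcard : ((C ∩ T) ∪ (C \ I)).ncard = (C ∩ T).ncard + (C \ I).ncard := by
        apply Set.ncard_union_eq _ (toFinite _) (toFinite _)
        exact Set.disjoint_left.2 fun x hx hx' => hx'.2 (hTI hx.2)
      set V : Set (Fin n) := (C ∩ I) ∪ T with hVdef
      have hVI : V ⊆ I := union_subset inter_subset_right hTI
      have hVHall : V.ncard ≤ (propsOf n Ps V).ncard := hHallI V hVI
      have hVcard : V.ncard + (C ∩ T).ncard = (C ∩ I).ncard + T.ncard := by
        have h := Set.ncard_union_add_ncard_inter (C ∩ I) T (toFinite _) (toFinite _)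
        have h2 : (C ∩ I) ∩ T = C ∩ T := by
          rw [inter_assoc, inter_eq_right.2 hTI]
        rw [h2] at h
        exact h
      have hPrV : propsOf n Ps V ⊆ propsOf n Ps C ∪ propsOf n Ps T := by
        rw [hVdef, propsOf_union]
        exact union_subset_union_left _ (propsOf_mono inter_subset_left)
      have hPrV' := Set.ncard_le_ncard hPrV (toFinite _)
      have hIE := Set.ncard_union_add_ncard_inter (propsOf n Ps C) (propsOf n Ps T)
        (toFinite _) (toFinite _)
      have hCcard := hcircCard C hC
      have hTt : (propsOf n Ps T).ncard ≤ T.ncard := hT.2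
      have hCpart := Set.ncard_inter_add_ncard_diff_eq_ncard C I (toFinite _)
      omega
    have : z ∈ (C ∩ T) ∪ (C \ I) := hKC.symm ▸ hzC
    rcases this with h | h
    · exact h.2
    · exact absurd hz h.2
  have hIT : I = T := subset_antisymm hstep3 hTI
  have hItight : (propsOf n Ps I).ncard = I.ncard :=
    le_antisymm (by rw [hIT]; exact hT.2) (hHallI I subset_rfl)
  have hPrFI : propsOf n Ps F = propsOf n Ps I := by
    apply subset_antisymm _ (propsOf_mono hIF)
    rintro p ⟨hpPs, w, hwVp, hwF⟩
    by_cases hwI : w ∈ I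
    · exact ⟨hpPs, w, hwVp, hwI⟩
    · exact propsOf_mono hTI (hstep2 w ⟨hwF, hwI⟩ ⟨hpPs, w, hwVp, rfl⟩)
  obtain ⟨x0, hx0⟩ := hFne
  obtain ⟨C0, hC0, hC0F, -⟩ := hcirc x0 hx0
  have hFdep : M.Dep F := hC0.1.superset hC0F (hsubE F)
  have hInF : I ⊂ F := hIF.ssubset_of_ne (fun h => hFdep.not_indep (h ▸ hIind))
  have hPrFcard : (propsOf n Ps F).ncard < F.ncard := by
    rw [hPrFI, hItight]
    exact Set.ncard_lt_ncard hInF (toFinite _)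
  -- key closure fact
  have hkey : ∀ x : Fin n, propsOf n Ps {x} ⊆ propsOf n Ps F → x ∈ F := by
    intro x hx
    by_cases hxF : x ∈ F
    · exact hxF
    exfalso
    have hxI : x ∉ I := fun h => hxF (hIF h)
    have hdepx : M.Dep (insert x I) := by
      rw [hdep]
      refine ⟨insert x I, subset_rfl, ?_⟩
      have h1 : propsOf n Ps (insert x I) = propsOf n Ps I := by
        apply subset_antisymm _ (propsOf_mono (subset_insert _ _))
        rw [Set.insert_eq, propsOf_union]
        exact union_subset (hPrFI ▸ hx) subset_rfl
      rw [h1, hItight, Set.ncard_insert_of_notMem hxI (toFinite _)]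
      omega
    have hmem : x ∈ M.closure I := hIind.mem_closure_iff.2 (Or.inl hdepx)
    rw [hI.closure_eq_closure, hflat.closure] at hmem
    exact hxF hmem
  -- F = FP
  have hFP : F = FP n Ps (propsOf n Ps F) := by
    apply subset_antisymm
    · intro x hxF
      constructor
      · have hxV : x ∈ VP n Ps := hcover ▸ mem_univ x
        obtain ⟨p, hpPs, hxp⟩ := mem_VP.1 hxV
        exact mem_VP.2 ⟨p, ⟨hpPs, x, hxp, hxF⟩, hxp⟩
      · intro hxbad
        obtain ⟨q, hq, hxq⟩ := mem_VP.1 hxbad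
        exact hq.2 ⟨hq.1, x, hxq, hxF⟩
    · rintro x ⟨hx1, hx2⟩
      apply hkey
      rintro p ⟨hpPs, w, hwVp, hwx⟩
      by_contra hpF
      exact hx2 (mem_VP.2 ⟨p, ⟨hpPs, hpF⟩, hwx ▸ hwVp⟩)
  exact ⟨⟨hFP, hPrFcard⟩, propsOf n Ps F, fun p hp => hp.1, hFP, hPrFcard⟩
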